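/- arXiv:1609.03857 — 2 statements merged into one kernel-verified Lean document; each statement's English description precedes it below -/
import Mathlib

section
/- Let u ∈ MR(I) with u(a) = 0. Then ‖u‖²_{L²(I;H)} ≤ ((b − a)/(2√2)) · ‖u‖²_{MR(I)}. -/
open MeasureTheory Set RCLike

noncomputable section

/-- Cauchy–Schwarz for real integrals. -/
lemma integral_mul_le_sqrt_mul_sqrt {α : Type*} {m : MeasurableSpace α} (μ : Measure α)
    (f g : α → ℝ) (hf2 : Integrable (fun x => f x ^ 2) μ)
    (hg2 : Integrable (fun x => g x ^ 2) μ) (hfg : Integrable (fun x => f x * g x) μ) :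
    ∫ x, f x * g x ∂μ ≤ Real.sqrt (∫ x, f x ^ 2 ∂μ) * Real.sqrt (∫ x, g x ^ 2 ∂μ) := by
  set A := ∫ x, f x ^ 2 ∂μ with hA
  set B := ∫ x, g x ^ 2 ∂μ with hB
  have hA0 : 0 ≤ A := integral_nonneg fun x => sq_nonneg _
  have hB0 : 0 ≤ B := integral_nonneg fun x => sq_nonneg _
  have key : ∀ ε : ℝ, 0 < ε → (∫ x, f x * g x ∂μ) ≤ ε * A + B / (4 * ε) := by
    intro ε hε
    have h4 : (0:ℝ) < 4 * ε := by linarith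
    have hle : ∀ x, f x * g x ≤ ε * f x ^ 2 + g x ^ 2 / (4 * ε) := by
      intro x
      rw [← mul_le_mul_iff_right₀ h4]
      have heq : 4 * ε * (ε * f x ^ 2 + g x ^ 2 / (4 * ε)) = 4 * ε ^ 2 * f x ^ 2 + g x ^ 2 := by
        field_simp
      rw [heq]
      nlinarith [sq_nonneg (2 * ε * f x - g x)]
    calc (∫ x, f x * g x ∂μ)
        ≤ ∫ x, (ε * f x ^ 2 + g x ^ 2 / (4 * ε)) ∂μ :=
          integral_mono hfg ((hf2.const_mul ε).add (hg2.div_const (4 * ε))) hle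
      _ = ε * A + B / (4 * ε) := by
          rw [integral_add (hf2.const_mul ε) (hg2.div_const (4 * ε)),
            integral_const_mul, integral_div]
  rcases eq_or_lt_of_le hA0 with hA0' | hA0'
  · have h0 : (∫ x, f x * g x ∂μ) ≤ 0 := by
      refine le_of_forall_pos_le_add fun δ hδ => ?_
      rcases eq_or_lt_of_le hB0 with hB0' | hB0'
      · have := key 1 one_pos
        rw [← hA0', ← hB0'] at this
        simpa using this.trans (by linarith)
      · have := key (B / (4 * δ)) (by positivity)
        rw [← hA0'] at this
        have heq : B / (4 * δ) * 0 + B / (4 * (B / (4 * δ))) = δ := by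
          field_simp; ring
        rw [heq] at this
        linarith
    rw [← hA0', Real.sqrt_zero, zero_mul]
    exact h0
  · rcases eq_or_lt_of_le hB0 with hB0' | hB0'
    · have h0 : (∫ x, f x * g x ∂μ) ≤ 0 := by
        refine le_of_forall_pos_le_add fun δ hδ => ?_
        have := key (δ / A) (by positivity)
        rw [← hB0'] at this
        have heq : δ / A * A + 0 / (4 * (δ / A)) = δ := by
          field_simp
          ring
        rw [heq] at this
        linarith
      rw [← hB0', Real.sqrt_zero, mul_zero]
      exact h0
    · have hsA : 0 < Real.sqrt A := Real.sqrt_pos.2 hA0'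
      have hsB : 0 < Real.sqrt B := Real.sqrt_pos.2 hB0'
      have hA' : Real.sqrt A ^ 2 = A := Real.sq_sqrt hA0
      have hB' : Real.sqrt B ^ 2 = B := Real.sq_sqrt hB0
      have := key (Real.sqrt B / (2 * Real.sqrt A)) (by positivity)
      refine this.trans (le_of_eq ?_)
      field_simp
      nlinarith [hA', hB', hsA, hsB]

/-- Evaluation at a point is continuous on the antidual. -/
lemma continuous_eval_antidual {𝕜 V : Type*} [RCLike 𝕜] [NormedAddCommGroup V]
    [NormedSpace 𝕜 V] (w : V) :
    Continuous fun φ : V →SL[starRingEnd 𝕜] 𝕜 => φ w := by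
  refine (LipschitzWith.of_dist_le_mul (K := ‖w‖₊) fun φ ψ => ?_).continuous
  rw [dist_eq_norm, dist_eq_norm, ← ContinuousLinearMap.sub_apply]
  calc ‖(φ - ψ) w‖ ≤ ‖φ - ψ‖ * ‖w‖ := (φ - ψ).le_opNorm w
    _ = ‖w‖₊ * ‖φ - ψ‖ := by rw [coe_nnnorm, mul_comm]


/-- The antidual `V'` of `V`: continuous conjugate-linear functionals on `V`. -/
abbrev Antidual (𝕜 V : Type*) [RCLike 𝕜] [NormedAddCommGroup V] [NormedSpace 𝕜 V] :
    Type _ :=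
  V →SL[starRingEnd 𝕜] 𝕜

/-- `P : H → H` is the orthogonal projection onto the set `C`. -/
def IsOrthProj {H : Type*} [NormedAddCommGroup H] (C : Set H) (P : H → H) : Prop :=
  ∀ x : H, P x ∈ C ∧ ∀ y ∈ C, ‖x - P x‖ ≤ ‖x - y‖

variable {𝕜 V H : Type*} [RCLike 𝕜]
  [NormedAddCommGroup V] [InnerProductSpace 𝕜 V]
  [NormedAddCommGroup H] [InnerProductSpace 𝕜 H]

/-- `𝔞 ∈ Form([a,b];V,H)`: a bounded (constant `M`) `H`-elliptic (constants `α`, `ω`)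
non-autonomous sesquilinear form, relative to the continuous dense embedding `ι : V ↪ H`. -/
structure IsForm (ι : V →L[𝕜] H) (a b : ℝ) (𝔞 : ℝ → V → V → 𝕜) (M α ω : ℝ) : Prop where
  inj : Function.Injective ι
  denseRange : DenseRange ι
  add_left : ∀ t ∈ Icc a b, ∀ v v' w : V, 𝔞 t (v + v') w = 𝔞 t v w + 𝔞 t v' w
  smul_left : ∀ t ∈ Icc a b, ∀ (c : 𝕜) (v w : V), 𝔞 t (c • v) w = c * 𝔞 t v w
  add_right : ∀ t ∈ Icc a b, ∀ v w w' : V, 𝔞 t v (w + w') = 𝔞 t v w + 𝔞 t v w'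
  smul_right : ∀ t ∈ Icc a b, ∀ (c : 𝕜) (v w : V),
    𝔞 t v (c • w) = starRingEnd 𝕜 c * 𝔞 t v w
  meas : ∀ v w : V, AEStronglyMeasurable (fun t => 𝔞 t v w) (volume.restrict (Icc a b))
  M_nonneg : 0 ≤ M
  bounded : ∀ t ∈ Icc a b, ∀ v w : V, ‖𝔞 t v w‖ ≤ M * ‖v‖ * ‖w‖
  α_pos : 0 < α
  elliptic : ∀ t ∈ Icc a b, ∀ v : V, α * ‖v‖ ^ 2 ≤ re (𝔞 t v v) + ω * ‖v‖ ^ 2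

/-- `u ∈ MR([a,b]) = H¹(a,b;V') ∩ L²(a,b;V)`, where `u : ℝ → H` is the continuous
representative, `uV : ℝ → V` the a.e. `V`-valued representative and
`u' : ℝ → V'` the weak derivative. -/
structure MemMR (ι : V →L[𝕜] H) (a b : ℝ) (u : ℝ → H) (uV : ℝ → V)
    (u' : ℝ → Antidual 𝕜 V) : Prop where
  contOn : ContinuousOn u (Icc a b)
  aeV : ∀ᵐ t ∂(volume.restrict (Icc a b)), ι (uV t) = u t
  memL2V : MemLp uV 2 (volume.restrict (Icc a b))
  memL2D : MemLp u' 2 (volume.restrict (Icc a b))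
  ftc : ∀ t ∈ Icc a b, ∀ w : V,
    (inner 𝕜 (ι w) (u t) : 𝕜) = inner 𝕜 (ι w) (u a) + ∫ s in a..t, u' s w



/-- **Lemma 5.2.** For `u ∈ MR(I)` with `u(a) = 0` one has
`‖u‖²_{L²(I;H)} ≤ ((b − a)/(2√2)) ‖u‖²_{MR(I)}`. -/
theorem L2H_norm_le_MR_norm
    {𝕜 V H : Type*} [RCLike 𝕜]
    [NormedAddCommGroup V] [InnerProductSpace 𝕜 V] [CompleteSpace V]
    [NormedAddCommGroup H] [InnerProductSpace 𝕜 H] [CompleteSpace H]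
    (ι : V →L[𝕜] H) (a b : ℝ) (hab : a < b)
    (hinj : Function.Injective ι) (hdense : DenseRange ι)
    (u : ℝ → H) (uV : ℝ → V) (u' : ℝ → Antidual 𝕜 V)
    (hu : MemMR ι a b u uV u') (hza : u a = 0) :
    (∫ s in a..b, ‖u s‖ ^ 2) ≤
      (b - a) / (2 * Real.sqrt 2) *
        ((∫ s in a..b, ‖u' s‖ ^ 2) + ∫ s in a..b, ‖uV s‖ ^ 2) := by
  have hab' : a ≤ b := hab.le
  -- convert interval integrals to integrals over `Icc a b`
  simp only [intervalIntegral.integral_of_le hab']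
  rw [← integral_Icc_eq_integral_Ioc, ← integral_Icc_eq_integral_Ioc,
    ← integral_Icc_eq_integral_Ioc]
  haveI hfin : IsFiniteMeasure (volume.restrict (Icc a b)) := by
    constructor
    rw [Measure.restrict_apply_univ, Real.volume_Icc]
    exact ENNReal.ofReal_lt_top
  have hfm : MemLp (fun s => ‖u' s‖) 2 (volume.restrict (Icc a b)) := hu.memL2D.norm
  have hgm : MemLp (fun s => ‖uV s‖) 2 (volume.restrict (Icc a b)) := hu.memL2V.norm
  have hf2 : Integrable (fun s => ‖u' s‖ ^ 2) (volume.restrict (Icc a b)) := hfm.integrable_sq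
  have hg2 : Integrable (fun s => ‖uV s‖ ^ 2) (volume.restrict (Icc a b)) := hgm.integrable_sq
  have hf1 : Integrable (fun s => ‖u' s‖) (volume.restrict (Icc a b)) := hfm.integrable one_le_two
  have hg1 : Integrable (fun s => ‖uV s‖) (volume.restrict (Icc a b)) := hgm.integrable one_le_two
  set F := ∫ s in Icc a b, ‖u' s‖ ^ 2 with hF
  set G := ∫ s in Icc a b, ‖uV s‖ ^ 2 with hG
  have hF0 : 0 ≤ F := integral_nonneg fun _ => sq_nonneg _
  have hG0 : 0 ≤ G := integral_nonneg fun _ => sq_nonneg _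
  -- pointwise bound
  have hptwise : ∀ᵐ t ∂(volume.restrict (Icc a b)),
      ‖u t‖ ^ 2 ≤ Real.sqrt F * (Real.sqrt (t - a) * ‖uV t‖) := by
    filter_upwards [hu.aeV, ae_restrict_mem measurableSet_Icc] with t hι ht
    have hat : a ≤ t := ht.1
    have htb : t ≤ b := ht.2
    have hsub : Ioc a t ⊆ Icc a b := Ioc_subset_Icc_self.trans (Icc_subset_Icc le_rfl htb)
    have hf1' : IntegrableOn (fun s => ‖u' s‖) (Icc a b) volume := hf1
    have hfIoc : IntegrableOn (fun s => ‖u' s‖) (Ioc a t) volume := hf1'.mono_set hsub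
    have hdom : IntegrableOn (fun s => ‖u' s‖ * ‖uV t‖) (Ioc a t) volume :=
      hfIoc.mul_const _
    have happ_meas : AEStronglyMeasurable (fun s => u' s (uV t)) (volume.restrict (Ioc a t)) := by
      have h1 : AEStronglyMeasurable u' (volume.restrict (Ioc a t)) :=
        hu.memL2D.aestronglyMeasurable.mono_measure (Measure.restrict_mono hsub le_rfl)
      exact (continuous_eval_antidual (𝕜 := 𝕜) (uV t)).comp_aestronglyMeasurable h1
    have happ : IntegrableOn (fun s => u' s (uV t)) (Ioc a t) volume :=
      Integrable.mono' hdom happ_meas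
        (Filter.Eventually.of_forall fun s => (u' s).le_opNorm _)
    have hIc : IntervalIntegrable (fun s => u' s (uV t)) volume a t :=
      (intervalIntegrable_iff_integrableOn_Ioc_of_le hat).2 happ
    have hIc2 : IntervalIntegrable (fun s => ‖u' s‖ * ‖uV t‖) volume a t :=
      (intervalIntegrable_iff_integrableOn_Ioc_of_le hat).2 hdom
    have key1 : (inner 𝕜 (u t) (u t) : 𝕜) = ∫ s in a..t, u' s (uV t) := by
      have h := hu.ftc t ht (uV t)
      rw [hι, hza, inner_zero_right, zero_add] at h
      exact h
    have step1 : ‖u t‖ ^ 2 ≤ (∫ s in a..t, ‖u' s‖) * ‖uV t‖ := by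
      have h1 : ‖u t‖ ^ 2 ≤ ‖∫ s in a..t, u' s (uV t)‖ := by
        rw [← inner_self_eq_norm_sq (𝕜 := 𝕜) (u t), key1]
        exact RCLike.re_le_norm _
      have h2 : ‖∫ s in a..t, u' s (uV t)‖ ≤ ∫ s in a..t, ‖u' s (uV t)‖ :=
        intervalIntegral.norm_integral_le_integral_norm hat
      have h3 : (∫ s in a..t, ‖u' s (uV t)‖) ≤ ∫ s in a..t, ‖u' s‖ * ‖uV t‖ :=
        intervalIntegral.integral_mono_on hat hIc.norm hIc2 fun s _ => (u' s).le_opNorm _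
      have h4 : (∫ s in a..t, ‖u' s‖ * ‖uV t‖) = (∫ s in a..t, ‖u' s‖) * ‖uV t‖ :=
        intervalIntegral.integral_mul_const _ _
      linarith [h1.trans (h2.trans (h4 ▸ h3))]
    have step2 : (∫ s in a..t, ‖u' s‖) ≤ Real.sqrt (t - a) * Real.sqrt F := by
      have hf2' : Integrable (fun s => ‖u' s‖ ^ 2) (volume.restrict (Ioc a t)) := by
        have : IntegrableOn (fun s => ‖u' s‖ ^ 2) (Icc a b) volume := hf2
        exact this.mono_set hsub
      have hone : Integrable (fun _ : ℝ => (1:ℝ) ^ 2) (volume.restrict (Ioc a t)) := by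
        simp only [one_pow]
        exact integrableOn_const measure_Ioc_lt_top.ne
      have hcs := integral_mul_le_sqrt_mul_sqrt (volume.restrict (Ioc a t))
        (fun s => ‖u' s‖) (fun _ => (1:ℝ)) hf2' hone (by simpa using hfIoc.integrable)
      have e1 : (∫ s in a..t, ‖u' s‖) = ∫ s, ‖u' s‖ * 1 ∂(volume.restrict (Ioc a t)) := by
        rw [intervalIntegral.integral_of_le hat]; simp
      have e2 : (∫ _ : ℝ, (1:ℝ) ^ 2 ∂(volume.restrict (Ioc a t))) = t - a := by
        simp [Real.volume_Ioc, ENNReal.toReal_ofReal (by linarith : (0:ℝ) ≤ t - a), hat]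
      have e3 : (∫ s, ‖u' s‖ ^ 2 ∂(volume.restrict (Ioc a t))) ≤ F := by
        rw [hF]
        exact setIntegral_mono_set hf2 (Filter.Eventually.of_forall fun s => sq_nonneg _)
          (HasSubset.Subset.eventuallyLE hsub)
      calc (∫ s in a..t, ‖u' s‖)
          = ∫ s, ‖u' s‖ * 1 ∂(volume.restrict (Ioc a t)) := e1
        _ ≤ Real.sqrt (∫ s, ‖u' s‖ ^ 2 ∂(volume.restrict (Ioc a t))) *
              Real.sqrt (∫ _ : ℝ, (1:ℝ) ^ 2 ∂(volume.restrict (Ioc a t))) := hcs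
        _ ≤ Real.sqrt F * Real.sqrt (t - a) := by
            rw [e2]
            exact mul_le_mul_of_nonneg_right (Real.sqrt_le_sqrt e3) (Real.sqrt_nonneg _)
        _ = Real.sqrt (t - a) * Real.sqrt F := mul_comm _ _
    calc ‖u t‖ ^ 2 ≤ (∫ s in a..t, ‖u' s‖) * ‖uV t‖ := step1
      _ ≤ (Real.sqrt (t - a) * Real.sqrt F) * ‖uV t‖ :=
          mul_le_mul_of_nonneg_right step2 (norm_nonneg _)
      _ = Real.sqrt F * (Real.sqrt (t - a) * ‖uV t‖) := by ring
  -- integrate the pointwise bound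
  have hψint : Integrable (fun t => ‖u t‖ ^ 2) (volume.restrict (Icc a b)) :=
    (hu.contOn.norm.pow 2).integrableOn_Icc
  have hsqrt_cont : Continuous fun t : ℝ => Real.sqrt (t - a) :=
    Real.continuous_sqrt.comp (continuous_id.sub continuous_const)
  have hprod : Integrable (fun t => Real.sqrt (t - a) * ‖uV t‖) (volume.restrict (Icc a b)) := by
    refine hg1.bdd_mul (c := Real.sqrt (b - a)) hsqrt_cont.aestronglyMeasurable ?_
    filter_upwards [ae_restrict_mem measurableSet_Icc] with t ht
    rw [Real.norm_eq_abs, abs_of_nonneg (Real.sqrt_nonneg _)]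
    exact Real.sqrt_le_sqrt (by linarith [ht.2])
  have hsq2 : Integrable (fun t => Real.sqrt (t - a) ^ 2) (volume.restrict (Icc a b)) :=
    (hsqrt_cont.pow 2).continuousOn.integrableOn_Icc
  have hcs3 := integral_mul_le_sqrt_mul_sqrt (volume.restrict (Icc a b))
    (fun t => Real.sqrt (t - a)) (fun t => ‖uV t‖) hsq2 hg2 hprod
  have hQ : (∫ t, Real.sqrt (t - a) ^ 2 ∂(volume.restrict (Icc a b))) = (b - a) ^ 2 / 2 := by
    have h1 : (∫ t, Real.sqrt (t - a) ^ 2 ∂(volume.restrict (Icc a b)))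
        = ∫ t in Icc a b, (t - a) := by
      refine integral_congr_ae ?_
      filter_upwards [ae_restrict_mem measurableSet_Icc] with t ht
      exact Real.sq_sqrt (by linarith [ht.1])
    rw [h1, integral_Icc_eq_integral_Ioc, ← intervalIntegral.integral_of_le hab',
      intervalIntegral.integral_sub intervalIntegral.intervalIntegrable_id (intervalIntegrable_const (c := a)),
      integral_id, intervalIntegral.integral_const, smul_eq_mul]
    ring
  have hQ' : Real.sqrt ((b - a) ^ 2 / 2) = (b - a) / Real.sqrt 2 := by
    rw [Real.sqrt_div (sq_nonneg _), Real.sqrt_sq (by linarith : (0:ℝ) ≤ b - a)]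
  have main : (∫ t in Icc a b, ‖u t‖ ^ 2)
      ≤ Real.sqrt F * ((b - a) / Real.sqrt 2 * Real.sqrt G) := by
    calc (∫ t in Icc a b, ‖u t‖ ^ 2)
        ≤ ∫ t, Real.sqrt F * (Real.sqrt (t - a) * ‖uV t‖) ∂(volume.restrict (Icc a b)) :=
          integral_mono_ae hψint (hprod.const_mul _) hptwise
      _ = Real.sqrt F * ∫ t, Real.sqrt (t - a) * ‖uV t‖ ∂(volume.restrict (Icc a b)) :=
          integral_const_mul _ _
      _ ≤ Real.sqrt F * (Real.sqrt ((b - a) ^ 2 / 2) * Real.sqrt G) := by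
          refine mul_le_mul_of_nonneg_left ?_ (Real.sqrt_nonneg _)
          rw [← hQ]
          exact hcs3
      _ = Real.sqrt F * ((b - a) / Real.sqrt 2 * Real.sqrt G) := by rw [hQ']
  refine main.trans ?_
  have hs2 : 0 < Real.sqrt 2 := Real.sqrt_pos.2 two_pos
  have hkey : 2 * (Real.sqrt F * Real.sqrt G) ≤ F + G := by
    nlinarith [sq_nonneg (Real.sqrt F - Real.sqrt G), Real.sq_sqrt hF0, Real.sq_sqrt hG0]
  have hc : 0 ≤ (b - a) / Real.sqrt 2 := div_nonneg (by linarith) hs2.le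
  have heq : (b - a) / (2 * Real.sqrt 2) * (F + G) = (b - a) / Real.sqrt 2 * ((F + G) / 2) := by
    rw [div_mul_eq_mul_div, div_mul_eq_mul_div,
      div_eq_div_iff (by positivity) (by positivity)]
    ring
  rw [heq]
  calc Real.sqrt F * ((b - a) / Real.sqrt 2 * Real.sqrt G)
      = (b - a) / Real.sqrt 2 * (Real.sqrt F * Real.sqrt G) := by ring
    _ ≤ (b - a) / Real.sqrt 2 * ((F + G) / 2) :=
        mul_le_mul_of_nonneg_left (by linarith) hc
end
end

section
/- Let Ω ⊆ ℝ^d be a measurable set with finite measure, H = L²(Ω;ℝ), C := {g ∈ H : 0 ≤ g ≤ 1 a.e.}, and P : H → H the orthogonal projection onto C. Let F : ℝ → ℝ be locally Lipschitz with F(0) = F(1) = 0. Then for every g ∈ H the function F ∘ (Pg) belongs to H and (F(Pg) | g − Pg)_H = 0, i.e. ∫_Ω F(Pg(x)) · (g(x) − Pg(x)) dx = 0. -/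
open MeasureTheory Set

noncomputable section

/-- Pointwise clamping of a real number to `[0,1]` is `1`-Lipschitz. -/
lemma clamp_lipschitz : LipschitzWith 1 (fun r : ℝ => max (min r 1) 0) :=
  (LipschitzWith.id.min_const 1).max_const 0

/-- The pointwise clamping map on `L²(Ω)`, i.e. the orthogonal projection onto
`C = {g : 0 ≤ g ≤ 1 a.e.}`. -/
def clampLp {d : ℕ} (Ω : Set (Fin d → ℝ)) :
    Lp ℝ 2 (volume.restrict Ω) → Lp ℝ 2 (volume.restrict Ω) :=
  clamp_lipschitz.compLp (by simp)

lemma clamp_mem_Icc (r : ℝ) : max (min r 1) 0 ∈ Icc (0:ℝ) 1 :=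
  ⟨le_max_right _ _, max_le (min_le_right _ _) zero_le_one⟩

lemma key_pointwise (F : ℝ → ℝ) (hF0 : F 0 = 0) (hF1 : F 1 = 0) (r : ℝ) :
    F (max (min r 1) 0) * (r - max (min r 1) 0) = 0 := by
  rcases le_or_gt r 0 with h | h
  · rw [min_eq_left (h.trans zero_le_one), max_eq_right h, hF0, zero_mul]
  rcases le_or_gt 1 r with h1 | h1
  · rw [min_eq_right h1, max_eq_left zero_le_one, hF1, zero_mul]
  · rw [min_eq_left h1.le, max_eq_left h.le, sub_self, mul_zero]

/-- If `F : ℝ → ℝ` is locally Lipschitz with `F(0) = F(1) = 0`, then for every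
`g ∈ L²(Ω)` the composition `F ∘ Pg` is in `L²(Ω)` and `(F(Pg) | g − Pg)_{L²} = 0`,
i.e. `∫_Ω F(Pg(x))(g(x) − Pg(x)) dx = 0`. -/
theorem orthogonality_semilinear_term {d : ℕ} (Ω : Set (Fin d → ℝ))
    (hΩ : MeasurableSet Ω) (hfin : volume Ω < ⊤)
    (F : ℝ → ℝ)
    (hF : ∀ s : Set ℝ, Bornology.IsBounded s → ∃ L : NNReal, LipschitzOnWith L F s)
    (hF0 : F 0 = 0) (hF1 : F 1 = 0)
    (g : Lp ℝ 2 (volume.restrict Ω)) :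
    MemLp (fun x => F (clampLp Ω g x)) 2 (volume.restrict Ω) ∧
    ∫ x, F (clampLp Ω g x) * (g x - clampLp Ω g x) ∂(volume.restrict Ω) = 0 := by
  have hcoe : ∀ᵐ x ∂(volume.restrict Ω),
      clampLp Ω g x = max (min (g x) 1) 0 :=
    clamp_lipschitz.coeFn_compLp (by simp) g
  obtain ⟨L, hL⟩ := hF (Icc 0 1) (Metric.isBounded_Icc 0 1)
  haveI : IsFiniteMeasure (volume.restrict Ω) :=
    ⟨by rwa [Measure.restrict_apply_univ]⟩
  have hFc : Continuous (fun r : ℝ => F (max (min r 1) 0)) :=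
    hL.continuousOn.comp_continuous clamp_lipschitz.continuous
      (fun r => clamp_mem_Icc r)
  constructor
  · apply MemLp.of_bound (C := (L : ℝ))
    · refine (hFc.comp_aestronglyMeasurable
        (Lp.aestronglyMeasurable g)).congr ?_
      filter_upwards [hcoe] with x hx
      simp [Function.comp, hx]
    · filter_upwards [hcoe] with x hx
      rw [hx]
      have := hL.norm_sub_le (clamp_mem_Icc (g x)) (⟨le_refl 0, zero_le_one⟩ : (0:ℝ) ∈ Icc (0:ℝ) 1)
      rw [hF0, sub_zero] at this
      refine this.trans ?_
      calc (L : ℝ) * ‖max (min (g x) 1) 0 - 0‖ ≤ (L:ℝ) * 1 := by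
            apply mul_le_mul_of_nonneg_left _ L.coe_nonneg
            rw [sub_zero, Real.norm_eq_abs, abs_of_nonneg (le_max_right _ _)]
            exact max_le (min_le_right _ _) zero_le_one
        _ = L := mul_one _
  · have : ∀ᵐ x ∂(volume.restrict Ω),
        F (clampLp Ω g x) * (g x - clampLp Ω g x) = 0 := by
      filter_upwards [hcoe] with x hx
      rw [hx]; exact key_pointwise F hF0 hF1 (g x)
    rw [integral_congr_ae this, integral_zero]

end
end
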